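/- arXiv:2110.08616 — 5 statements merged into one kernel-verified Lean document; each statement's English description precedes it below -/
import Mathlib

section
/- Let E be a finite-dimensional real normed vector space, let G = EuclideanSpace ℝ (Fin o), let y ∈ G, let C > 0, let F : E → G be differentiable at a point θ*, and define L : E → ℝ by L(θ) = (C/2)·‖F(θ) − y‖². If the Fréchet derivative of L at θ* is zero and the Fréchet derivative of F at θ* is surjective, then L(θ*) = 0 and L(θ*) ≤ L(θ) for every θ ∈ E; in particular θ* is a global minimizer and not a saddle point. -/
/-- Lemma 1 (no-saddle-point part): for the sample-wise loss
`L θ = (C/2)·‖F θ − y‖²` with `C > 0`, a critical point `θ*` of `L` at which the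
Fréchet derivative of `F` is surjective achieves `L θ* = 0` and is a global
minimizer; in particular it is not a saddle point. -/
theorem stmt_2 {E : Type*}
    [NormedAddCommGroup E] [NormedSpace ℝ E] [FiniteDimensional ℝ E]
    {o : ℕ} (y : EuclideanSpace ℝ (Fin o)) (C : ℝ) (hC : 0 < C)
    (F : E → EuclideanSpace ℝ (Fin o)) (θstar : E)
    (hF : DifferentiableAt ℝ F θstar)
    (L : E → ℝ) (hL : ∀ θ, L θ = (C / 2) * ‖F θ - y‖ ^ 2)
    (hcrit : fderiv ℝ L θstar = 0)
    (hsurj : Function.Surjective (fderiv ℝ F θstar)) :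
    L θstar = 0 ∧ ∀ θ : E, L θstar ≤ L θ := by
  have hLfun : L = fun θ => (C / 2) * ‖F θ - y‖ ^ 2 := funext hL
  set f' := fderiv ℝ F θstar with hf'
  have hF' : HasFDerivAt F f' θstar := hF.hasFDerivAt
  have hg : HasFDerivAt (fun θ => F θ - y) f' θstar := hF'.sub_const y
  have hinner :
      HasFDerivAt (fun θ => @inner ℝ _ _ (F θ - y) (F θ - y))
        ((fderivInnerCLM ℝ (F θstar - y, F θstar - y)).comp (f'.prod f')) θstar :=
    hg.inner ℝ hg
  have hLder : HasFDerivAt L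
      ((C / 2) • ((fderivInnerCLM ℝ (F θstar - y, F θstar - y)).comp (f'.prod f'))) θstar := by
    rw [hLfun]
    have := hinner.const_smul (C / 2)
    have heq : (fun θ => (C / 2) * ‖F θ - y‖ ^ 2) =
        (C / 2) • fun θ => @inner ℝ _ _ (F θ - y) (F θ - y) := by
      funext θ
      rw [Pi.smul_apply, smul_eq_mul, real_inner_self_eq_norm_sq]
    rw [heq]; exact this
  -- from criticality: for all w, ⟪F θstar - y, w⟫ = 0
  have hzero : ∀ w : EuclideanSpace ℝ (Fin o),
      @inner ℝ _ _ (F θstar - y) w = 0 := by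
    intro w
    obtain ⟨v, hv⟩ := hsurj w
    have h1 : fderiv ℝ L θstar = (C / 2) •
        ((fderivInnerCLM ℝ (F θstar - y, F θstar - y)).comp (f'.prod f')) := hLder.fderiv
    have h2 : ((C / 2) •
        ((fderivInnerCLM ℝ (F θstar - y, F θstar - y)).comp (f'.prod f'))) v = 0 := by
      rw [← h1, hcrit]; rfl
    simp only [ContinuousLinearMap.smul_apply, ContinuousLinearMap.comp_apply,
      ContinuousLinearMap.prod_apply, fderivInnerCLM_apply, hv] at h2
    have hC2 : (C / 2) ≠ 0 := by positivity
    have hsum := (smul_eq_zero.mp h2).resolve_left hC2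
    rw [real_inner_comm (F θstar - y) w] at hsum
    linarith
  have hFy : F θstar - y = 0 := by
    have := hzero (F θstar - y)
    rwa [inner_self_eq_zero] at this
  constructor
  · rw [hL, hFy]; simp
  · intro θ
    rw [hL, hL, hFy]
    have : (0:ℝ) ≤ C / 2 * ‖F θ - y‖ ^ 2 := by positivity
    simpa using this
end

section
/- Let E be a finite-dimensional real normed vector space, let G = EuclideanSpace ℝ (Fin o), let y ∈ G, let C > 0, let F : E → G be differentiable at a point θ*, with surjective Fréchet derivative at θ*, and define L : E → ℝ by L(θ) = (C/2)·‖F(θ) − y‖². If θ* is a local minimum of L, then F(θ*) = y, L(θ*) = 0, and L(θ*) ≤ L(θ) for every θ ∈ E; that is, every local optimum of the sample-wise loss L is a global optimum. -/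
/-- Lemma 1 (every local optimum is a global optimum): for the sample-wise loss
`L θ = (C/2)·‖F θ − y‖²` with `C > 0`, a local minimum `θ*` of `L` at which `F`
is differentiable with surjective Fréchet derivative satisfies `F θ* = y`,
`L θ* = 0`, and `L θ* ≤ L θ` for every `θ`. -/
theorem stmt_3 {E : Type*}
    [NormedAddCommGroup E] [NormedSpace ℝ E] [FiniteDimensional ℝ E]
    {o : ℕ} (y : EuclideanSpace ℝ (Fin o)) (C : ℝ) (hC : 0 < C)
    (F : E → EuclideanSpace ℝ (Fin o)) (θstar : E)
    (hF : DifferentiableAt ℝ F θstar)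
    (hsurj : Function.Surjective (fderiv ℝ F θstar))
    (L : E → ℝ) (hL : ∀ θ, L θ = (C / 2) * ‖F θ - y‖ ^ 2)
    (hmin : IsLocalMin L θstar) :
    F θstar = y ∧ L θstar = 0 ∧ ∀ θ : E, L θstar ≤ L θ := by
  set D := fderiv ℝ F θstar with hD
  have hf : HasFDerivAt (fun θ => F θ - y) D θstar := by
    simpa using (hF.hasFDerivAt.sub_const y)
  have hinner : HasFDerivAt (fun θ => inner ℝ (F θ - y) (F θ - y) : E → ℝ)
      ((fderivInnerCLM ℝ (F θstar - y, F θstar - y)).comp (D.prod D)) θstar :=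
    hf.inner ℝ hf
  have hLfun : L = fun θ => (C / 2) * (inner ℝ (F θ - y) (F θ - y) : ℝ) := by
    funext θ
    rw [hL θ, real_inner_self_eq_norm_sq]
  have hL' : HasFDerivAt L ((C / 2) •
      ((fderivInnerCLM ℝ (F θstar - y, F θstar - y)).comp (D.prod D))) θstar := by
    rw [hLfun]
    exact hinner.const_mul (C / 2)
  have hzero := hmin.hasFDerivAt_eq_zero hL'
  have key : ∀ v : E, (inner ℝ (F θstar - y) (D v) : ℝ) = 0 := by
    intro v
    have h := DFunLike.congr_fun hzero v
    simp only [ContinuousLinearMap.smul_apply, ContinuousLinearMap.comp_apply,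
      ContinuousLinearMap.prod_apply, fderivInnerCLM_apply,
      ContinuousLinearMap.zero_apply, smul_eq_mul] at h
    rcases mul_eq_zero.mp h with h | h
    · exact absurd h (by positivity : (0:ℝ) < C / 2).ne'
    · have hb : (inner ℝ (D v) (F θstar - y) : ℝ) = 0 := by linarith [real_inner_comm (D v) (F θstar - y)]
      rw [real_inner_comm]
      exact hb
  have hFy : F θstar = y := by
    obtain ⟨v, hv⟩ := hsurj (F θstar - y)
    have := key v
    rw [hv] at this
    have h0 : F θstar - y = 0 := inner_self_eq_zero.mp this
    exact sub_eq_zero.mp h0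
  have hL0 : L θstar = 0 := by
    rw [hL, hFy]; simp
  refine ⟨hFy, hL0, fun θ => ?_⟩
  rw [hL0, hL θ]
  positivity
end

section
/- Let n, m ≥ 1, let θ : Fin n → (Fin m → ℝ), and suppose x ∈ convexHull ℝ (range θ). Writing ‖v‖₁ = Σ_{k ∈ Fin m} |v(k)| for the ℓ1 norm on Fin m → ℝ, one has Σ_{i ∈ Fin n} ‖x − θ(i)‖₁² ≤ (Σ_{i ∈ Fin n} Σ_{j ∈ Fin n} ‖θ(i) − θ(j)‖₁)². -/
/-- Summed inequality (Eq. (15)–(17) of Theorem 2): for a point `x` in the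
convex hull of `n` points of `ℝ^m`, the sum of squared ℓ1 distances from `x` to
the points is bounded by the square of the sum of all pairwise ℓ1 distances,
where `‖v‖₁ = ∑ k, |v k|`. -/
theorem stmt_6 (n m : ℕ) (hn : 1 ≤ n) (hm : 1 ≤ m)
    (θ : Fin n → (Fin m → ℝ)) (x : Fin m → ℝ)
    (hx : x ∈ convexHull ℝ (Set.range θ)) :
    ∑ i : Fin n, (∑ k : Fin m, |x k - θ i k|) ^ 2 ≤
      (∑ i : Fin n, ∑ j : Fin n, ∑ k : Fin m, |θ i k - θ j k|) ^ 2 := by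
  set S : Fin n → ℝ := fun i => ∑ j : Fin n, ∑ k : Fin m, |θ i k - θ j k| with hS
  have hSnonneg : ∀ i, 0 ≤ S i := fun i =>
    Finset.sum_nonneg fun j _ => Finset.sum_nonneg fun k _ => abs_nonneg _
  -- key: each ℓ1 distance from x to θ i is ≤ S i
  have key : ∀ i : Fin n, ∑ k : Fin m, |x k - θ i k| ≤ S i := by
    intro i
    rw [mem_convexHull_iff_exists_fintype] at hx
    obtain ⟨ι, _, w, z, hw₀, hw₁, hz, hxe⟩ := hx
    choose f hf using fun t => hz t
    -- each z t = θ (f t)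
    have hd : ∀ t : ι, ∑ k : Fin m, |z t k - θ i k| ≤ S i := by
      intro t
      rw [← hf t]
      have : ∑ k : Fin m, |θ (f t) k - θ i k| ≤ ∑ j : Fin n, ∑ k : Fin m, |θ j k - θ i k| :=
        Finset.single_le_sum (f := fun j => ∑ k : Fin m, |θ j k - θ i k|)
          (fun j _ => Finset.sum_nonneg fun k _ => abs_nonneg _) (Finset.mem_univ (f t))
      calc ∑ k : Fin m, |θ (f t) k - θ i k| ≤ ∑ j : Fin n, ∑ k : Fin m, |θ j k - θ i k| := this
        _ = S i := by
            rw [hS]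
            exact Finset.sum_congr rfl fun j _ =>
              Finset.sum_congr rfl fun k _ => abs_sub_comm _ _
    have hxk : ∀ k : Fin m, x k = ∑ t : ι, w t * z t k := by
      intro k
      rw [← hxe]
      simp [Finset.sum_apply]
    calc ∑ k : Fin m, |x k - θ i k|
        = ∑ k : Fin m, |∑ t : ι, w t * (z t k - θ i k)| := by
          refine Finset.sum_congr rfl fun k _ => ?_
          congr 1
          rw [hxk k]
          simp only [mul_sub, Finset.sum_sub_distrib, ← Finset.sum_mul, hw₁, one_mul]
      _ ≤ ∑ k : Fin m, ∑ t : ι, |w t * (z t k - θ i k)| :=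
          Finset.sum_le_sum fun k _ => Finset.abs_sum_le_sum_abs _ _
      _ = ∑ t : ι, w t * ∑ k : Fin m, |z t k - θ i k| := by
          rw [Finset.sum_comm]
          refine Finset.sum_congr rfl fun t _ => ?_
          rw [Finset.mul_sum]
          exact Finset.sum_congr rfl fun k _ => by
            rw [abs_mul, abs_of_nonneg (hw₀ t)]
      _ ≤ ∑ t : ι, w t * S i :=
          Finset.sum_le_sum fun t _ => mul_le_mul_of_nonneg_left (hd t) (hw₀ t)
      _ = S i := by rw [← Finset.sum_mul, hw₁, one_mul]
  have hT : (0:ℝ) ≤ ∑ i : Fin n, S i := Finset.sum_nonneg fun i _ => hSnonneg i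
  calc ∑ i : Fin n, (∑ k : Fin m, |x k - θ i k|) ^ 2
      ≤ ∑ i : Fin n, S i ^ 2 := by
        refine Finset.sum_le_sum fun i _ => ?_
        exact pow_le_pow_left₀ (Finset.sum_nonneg fun k _ => abs_nonneg _) (key i) 2
    _ ≤ ∑ i : Fin n, S i * (∑ j : Fin n, S j) := by
        refine Finset.sum_le_sum fun i _ => ?_
        rw [sq]
        exact mul_le_mul_of_nonneg_left
          (Finset.single_le_sum (fun j _ => hSnonneg j) (Finset.mem_univ i)) (hSnonneg i)
    _ = (∑ i : Fin n, S i) ^ 2 := by rw [← Finset.sum_mul, sq]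
end

section
/- Let n, m ≥ 1 and H ≥ 0. Let θ*, θ₁*, …, θₙ* ∈ EuclideanSpace ℝ (Fin m) with θ* ∈ convexHull ℝ {θ₁*, …, θₙ*}. For each i ∈ [n], let lᵢ : EuclideanSpace ℝ (Fin m) → ℝ be differentiable with lᵢ(θᵢ*) = 0, fderiv ℝ lᵢ θᵢ* = 0, and the map θ ↦ fderiv ℝ lᵢ θ Lipschitz with constant H. Define Ψ = (√H / n²) · Σ_{i,j ∈ [n]} ‖θᵢ* − θⱼ*‖₁, where ‖v‖₁ = Σ_{k ∈ Fin m} |v(k)| is the ℓ1 norm of the coordinate vector. Then the training error J = (1/n) Σ_{i ∈ [n]} lᵢ(θ*) satisfies J ≤ (n³/2) · Ψ². -/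
lemma smooth_bound {m : ℕ} (H : ℝ) (hH : 0 ≤ H)
    (f : EuclideanSpace ℝ (Fin m) → ℝ) (x₀ y : EuclideanSpace ℝ (Fin m))
    (hdiff : Differentiable ℝ f) (hz : f x₀ = 0) (hg : fderiv ℝ f x₀ = 0)
    (hlip : LipschitzWith H.toNNReal (fun ϑ => fderiv ℝ f ϑ)) :
    f y ≤ H / 2 * ‖y - x₀‖ ^ 2 := by
  set v := y - x₀ with hv
  set γ : ℝ → EuclideanSpace ℝ (Fin m) := fun t => x₀ + t • v with hγ
  have hγd : ∀ t : ℝ, HasDerivAt γ v t := by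
    intro t
    simpa [hγ] using ((hasDerivAt_id t).smul_const v).const_add x₀
  set g : ℝ → ℝ := fun t => f (γ t) with hgdef
  have hgd : ∀ t : ℝ, HasDerivAt g (fderiv ℝ f (γ t) v) t := by
    intro t
    exact ((hdiff (γ t)).hasFDerivAt).comp_hasDerivAt t (hγd t)
  have hcont : Continuous fun t => fderiv ℝ f (γ t) v := by
    have h1 : Continuous γ := by continuity
    have h2 : Continuous (fun ϑ => fderiv ℝ f ϑ) := hlip.continuous
    exact (h2.comp h1).clm_apply continuous_const
  have hint : ∫ t in (0:ℝ)..1, fderiv ℝ f (γ t) v = g 1 - g 0 :=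
    intervalIntegral.integral_eq_sub_of_hasDerivAt
      (fun t _ => hgd t) (hcont.intervalIntegrable 0 1)
  have hg0 : g 0 = 0 := by simp [hgdef, hγ, hz]
  have hg1 : g 1 = f y := by simp [hgdef, hγ, hv]
  have hbound : ∀ t ∈ Set.Icc (0:ℝ) 1, fderiv ℝ f (γ t) v ≤ H * t * ‖v‖ ^ 2 := by
    intro t ht
    have h1 : ‖fderiv ℝ f (γ t)‖ ≤ H * t * ‖v‖ := by
      have hd := hlip.dist_le_mul (γ t) x₀
      rw [dist_eq_norm, dist_eq_norm] at hd
      have h2 : γ t - x₀ = t • v := by simp [hγ]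
      rw [hg, sub_zero, h2, norm_smul] at hd
      calc ‖fderiv ℝ f (γ t)‖ ≤ H.toNNReal * (‖(t:ℝ)‖ * ‖v‖) := hd
        _ = H * (|t| * ‖v‖) := by rw [Real.coe_toNNReal H hH]; simp
        _ = H * t * ‖v‖ := by rw [abs_of_nonneg ht.1]; ring
    calc fderiv ℝ f (γ t) v ≤ ‖fderiv ℝ f (γ t) v‖ := le_abs_self _
      _ ≤ ‖fderiv ℝ f (γ t)‖ * ‖v‖ := (fderiv ℝ f (γ t)).le_opNorm v
      _ ≤ (H * t * ‖v‖) * ‖v‖ := mul_le_mul_of_nonneg_right h1 (norm_nonneg _)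
      _ = H * t * ‖v‖ ^ 2 := by ring
  have hmono : ∫ t in (0:ℝ)..1, fderiv ℝ f (γ t) v ≤
      ∫ t in (0:ℝ)..1, H * ‖v‖ ^ 2 * t := by
    apply intervalIntegral.integral_mono_on zero_le_one
      (hcont.intervalIntegrable 0 1)
      (by apply Continuous.intervalIntegrable; continuity)
    intro t ht
    calc fderiv ℝ f (γ t) v ≤ H * t * ‖v‖ ^ 2 := hbound t ht
      _ = H * ‖v‖ ^ 2 * t := by ring
  have hval : ∫ t in (0:ℝ)..1, H * ‖v‖ ^ 2 * t = H / 2 * ‖v‖ ^ 2 := by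
    rw [intervalIntegral.integral_const_mul, integral_id]; ring
  rw [hint, hval, hg0, hg1, sub_zero] at hmono
  exact hmono

/-- Theorem 2: the training error `J = (1/n) ∑ i, lᵢ(θ*)` at a local optimum
`θ*` lying in the convex hull of the sample-wise local optima `θᵢ*` is bounded
by `(n³/2)·Ψ²`, where each `lᵢ` is differentiable with `H`-Lipschitz Fréchet
derivative, vanishes together with its derivative at `θᵢ*`, and
`Ψ = (√H / n²) ∑ i j, ‖θᵢ* − θⱼ*‖₁` with `‖v‖₁ = ∑ k, |v k|`. -/
theorem stmt_7 (n m : ℕ) (hn : 1 ≤ n) (hm : 1 ≤ m)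
    (H : ℝ) (hH : 0 ≤ H)
    (θstar : EuclideanSpace ℝ (Fin m)) (θ : Fin n → EuclideanSpace ℝ (Fin m))
    (hhull : θstar ∈ convexHull ℝ (Set.range θ))
    (l : Fin n → EuclideanSpace ℝ (Fin m) → ℝ)
    (hdiff : ∀ i, Differentiable ℝ (l i))
    (hzero : ∀ i, l i (θ i) = 0)
    (hgrad : ∀ i, fderiv ℝ (l i) (θ i) = 0)
    (hlip : ∀ i, LipschitzWith H.toNNReal (fun ϑ => fderiv ℝ (l i) ϑ))
    (Ψ : ℝ)
    (hΨ : Ψ = (Real.sqrt H / (n : ℝ) ^ 2) *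
      ∑ i : Fin n, ∑ j : Fin n, ∑ k : Fin m, |θ i k - θ j k|) :
    (1 / (n : ℝ)) * ∑ i : Fin n, l i θstar ≤ ((n : ℝ) ^ 3 / 2) * Ψ ^ 2 := by
  have hnpos : (0:ℝ) < n := by exact_mod_cast hn
  set S : ℝ := ∑ i : Fin n, ∑ j : Fin n, ∑ k : Fin m, |θ i k - θ j k| with hS
  have hd1nn : ∀ i j : Fin n, (0:ℝ) ≤ ∑ k : Fin m, |θ i k - θ j k| :=
    fun i j => Finset.sum_nonneg fun k _ => abs_nonneg _
  have hnorm_le : ∀ i j : Fin n, ‖θ i - θ j‖ ≤ ∑ k : Fin m, |θ i k - θ j k| := by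
    intro i j
    rw [EuclideanSpace.norm_eq]
    have h1 : ∀ k, ‖(θ i - θ j) k‖ = |θ i k - θ j k| := fun k => by
      simp [Real.norm_eq_abs]
    calc Real.sqrt (∑ k, ‖(θ i - θ j) k‖ ^ 2)
        = Real.sqrt (∑ k, |θ i k - θ j k| ^ 2) := by simp_rw [h1]
      _ ≤ Real.sqrt ((∑ k, |θ i k - θ j k|) ^ 2) :=
          Real.sqrt_le_sqrt (Finset.sum_sq_le_sq_sum_of_nonneg fun k _ => abs_nonneg _)
      _ = ∑ k, |θ i k - θ j k| := Real.sqrt_sq (hd1nn i j)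
  have hdist : ∀ i, ‖θstar - θ i‖ ≤ ∑ j : Fin n, ∑ k : Fin m, |θ i k - θ j k| := by
    intro i
    obtain ⟨x', hx', hle⟩ := convexHull_exists_dist_ge hhull (θ i)
    obtain ⟨j, rfl⟩ := hx'
    rw [← dist_eq_norm]
    calc dist θstar (θ i) ≤ dist (θ j) (θ i) := hle
      _ = ‖θ j - θ i‖ := dist_eq_norm _ _
      _ ≤ ∑ k, |θ j k - θ i k| := hnorm_le j i
      _ = ∑ k, |θ i k - θ j k| := by simp_rw [abs_sub_comm]
      _ ≤ ∑ j' : Fin n, ∑ k, |θ i k - θ j' k| :=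
          Finset.single_le_sum (fun j' _ => hd1nn i j') (Finset.mem_univ j)
  have hli : ∀ i, l i θstar ≤ H/2 * ‖θstar - θ i‖^2 := fun i =>
    smooth_bound H hH (l i) (θ i) θstar (hdiff i) (hzero i) (hgrad i) (hlip i)
  have hsum : ∑ i : Fin n, l i θstar ≤ H/2 * S^2 := by
    calc ∑ i : Fin n, l i θstar
        ≤ ∑ i : Fin n, H/2 * (∑ j : Fin n, ∑ k : Fin m, |θ i k - θ j k|)^2 := by
          apply Finset.sum_le_sum
          intro i _
          refine (hli i).trans ?_
          apply mul_le_mul_of_nonneg_left _ (by positivity)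
          exact pow_le_pow_left₀ (norm_nonneg _) (hdist i) 2
      _ = H/2 * ∑ i : Fin n, (∑ j : Fin n, ∑ k : Fin m, |θ i k - θ j k|)^2 := by
          rw [Finset.mul_sum]
      _ ≤ H/2 * S^2 := by
          apply mul_le_mul_of_nonneg_left _ (by positivity)
          exact Finset.sum_sq_le_sq_sum_of_nonneg fun i _ =>
            Finset.sum_nonneg fun j _ => hd1nn i j
  have hΨ2 : Ψ^2 = H / (n:ℝ)^4 * S^2 := by
    rw [hΨ, mul_pow, div_pow, Real.sq_sqrt hH]; ring
  rw [hΨ2]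
  have heq : (n:ℝ)^3/2 * (H/(n:ℝ)^4 * S^2) = 1/(n:ℝ) * (H/2 * S^2) := by
    field_simp
  rw [heq]
  exact mul_le_mul_of_nonneg_left hsum (by positivity)
end

section
/- Let (Ω, ℙ) be a probability space, n, m ≥ 1, H ≥ 0, σ ≥ 0, and δ ∈ (0, 1]. Let T₁, …, Tₙ : Ω → (Fin m → ℝ) be independent, identically distributed random vectors, and let θ* ∈ (Fin m → ℝ) be fixed. Writing ‖v‖₁ = Σ_{k ∈ Fin m} |v(k)| for the ℓ1 norm, set Xᵢ(ω) = (H/2)·‖θ* − Tᵢ(ω)‖₁², and assume X₁ is square-integrable with Var(X₁) ≤ σ². Let L̄ ∈ ℝ (the true population loss of θ*) satisfy L̄ ≤ 𝔼[X₁]. Assume that almost surely θ* ∈ convexHull ℝ {T₁(ω), …, Tₙ(ω)}. Define the random quantity Ψ(ω) = (√H / n²) · Σ_{i,j ∈ [n]} ‖Tᵢ(ω) − Tⱼ(ω)‖₁. Then ℙ[ L̄ ≤ (n³/2)·Ψ² + σ/√(nδ) ] ≥ 1 − δ. -/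
open MeasureTheory ProbabilityTheory

/-- The ℓ1 distance to a fixed point is convex. -/
lemma l1dist_convexOn (m : ℕ) (c : Fin m → ℝ) :
    ConvexOn ℝ Set.univ (fun x : Fin m → ℝ => ∑ k : Fin m, |x k - c k|) := by
  refine ⟨convex_univ, fun x _ y _ a b ha hb hab => ?_⟩
  simp only [smul_eq_mul, Pi.add_apply, Pi.smul_apply]
  rw [Finset.mul_sum, Finset.mul_sum, ← Finset.sum_add_distrib]
  refine Finset.sum_le_sum fun k _ => ?_
  have h : a * x k + b * y k - c k = a * (x k - c k) + b * (y k - c k) := by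
    linear_combination (c k) * hab
  rw [h]
  exact (abs_add_le _ _).trans (by rw [abs_mul, abs_mul, abs_of_nonneg ha, abs_of_nonneg hb])

/-- Theorem 3: with probability at least `1 − δ` over the draw of the `n` i.i.d.
sample-wise local optima `Tᵢ`, the true population loss `L̄` of the trained
optimum `θ*` (which satisfies `L̄ ≤ 𝔼[(H/2)·‖θ* − T₁‖₁²]`, where the variance of
`(H/2)·‖θ* − T₁‖₁²` is at most `σ²` and `θ*` almost surely lies in the convex
hull of the `Tᵢ`) is bounded by `(n³/2)·Ψ² + σ/√(nδ)`, where
`Ψ = (√H / n²) ∑ i j, ‖Tᵢ − Tⱼ‖₁` and `‖v‖₁ = ∑ k, |v k|`. -/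
theorem stmt_10 {Ω : Type*} [MeasurableSpace Ω] (μ : Measure Ω)
    [IsProbabilityMeasure μ]
    (n m : ℕ) (hn : 0 < n) (hm : 0 < m)
    (H σ δ : ℝ) (hH : 0 ≤ H) (hσ : 0 ≤ σ) (hδ : δ ∈ Set.Ioc (0 : ℝ) 1)
    (T : Fin n → Ω → (Fin m → ℝ))
    (hindep : iIndepFun T μ)
    (hident : ∀ i : Fin n, IdentDistrib (T i) (T ⟨0, hn⟩) μ μ)
    (θstar : Fin m → ℝ)
    (X : Fin n → Ω → ℝ)
    (hX : ∀ i ω, X i ω = (H / 2) * (∑ k : Fin m, |θstar k - T i ω k|) ^ 2)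
    (hL2 : MemLp (X ⟨0, hn⟩) 2 μ)
    (hvar : variance (X ⟨0, hn⟩) μ ≤ σ ^ 2)
    (Lbar : ℝ) (hLbar : Lbar ≤ ∫ ω, X ⟨0, hn⟩ ω ∂μ)
    (hhull : ∀ᵐ ω ∂μ, θstar ∈ convexHull ℝ (Set.range (fun i : Fin n => T i ω)))
    (Ψ : Ω → ℝ)
    (hΨ : ∀ ω, Ψ ω = (Real.sqrt H / (n : ℝ) ^ 2) *
      ∑ i : Fin n, ∑ j : Fin n, ∑ k : Fin m, |T i ω k - T j ω k|) :
    ENNReal.ofReal (1 - δ) ≤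
      μ {ω | Lbar ≤ ((n : ℝ) ^ 3 / 2) * Ψ ω ^ 2 + σ / Real.sqrt (n * δ)} := by
  classical
  obtain ⟨hδ0, hδ1⟩ := hδ
  have hnpos : (0 : ℝ) < n := Nat.cast_pos.mpr hn
  set i0 : Fin n := ⟨0, hn⟩ with hi0
  set g : (Fin m → ℝ) → ℝ := fun v => (H / 2) * (∑ k : Fin m, |θstar k - v k|) ^ 2 with hgdef
  have hgc : Continuous g := by
    apply continuous_const.mul
    exact (continuous_finset_sum _ fun k _ =>
      (continuous_const.sub (continuous_apply k)).abs).pow 2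
  have hXg : ∀ i, X i = g ∘ T i := fun i => funext fun ω => hX i ω
  have hid : ∀ i, IdentDistrib (X i) (X i0) μ μ := fun i => by
    rw [hXg i, hXg i0]; exact (hident i).comp hgc.measurable
  have hL2i : ∀ i, MemLp (X i) 2 μ := fun i => (hid i).symm.memLp_snd hL2
  have hint : ∀ i, Integrable (X i) μ := fun i => (hL2i i).integrable one_le_two
  set S : Ω → ℝ := fun ω => ∑ i, X i ω with hSdef
  have hSfun : S = ∑ i, X i := funext fun ω => by simp [hSdef]
  have hSL2 : MemLp S 2 μ := by
    rw [hSfun]; exact memLp_finset_sum' _ fun i _ => hL2i i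
  set E : ℝ := ∫ ω, X i0 ω ∂μ with hEdef
  have hES : ∫ ω, S ω ∂μ = n * E := by
    rw [show (fun ω => S ω) = S from rfl, hSfun]
    have : ∫ ω, (∑ i, X i) ω ∂μ = ∑ i : Fin n, ∫ ω, X i ω ∂μ := by
      simp only [Finset.sum_apply]
      exact integral_finset_sum _ fun i _ => hint i
    rw [this]
    have heach : ∀ i : Fin n, ∫ ω, X i ω ∂μ = E := fun i => (hid i).integral_eq
    simp [heach, Finset.card_univ]
  have hXindep : iIndepFun X μ := by
    have := hindep.comp (fun _ => g) (fun _ => hgc.measurable)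
    have hXe : X = fun i => g ∘ T i := funext hXg
    rw [hXe]; exact this
  have hVarS : variance S μ ≤ n * σ ^ 2 := by
    rw [hSfun]
    rw [IndepFun.variance_sum (fun i _ => hL2i i)
      (fun i _ j _ hij => hXindep.indepFun hij)]
    have : ∀ i : Fin n, variance (X i) μ = variance (X i0) μ := fun i => (hid i).variance_eq
    calc ∑ i : Fin n, variance (X i) μ = n * variance (X i0) μ := by
          simp [this, Finset.card_univ]
      _ ≤ n * σ ^ 2 := by nlinarith [variance_nonneg (X i0) μ]
  -- pointwise bound from the convex hull condition
  have hptwise : ∀ ω, θstar ∈ convexHull ℝ (Set.range (fun i : Fin n => T i ω)) →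
      S ω ≤ (n : ℝ) * (((n : ℝ) ^ 3 / 2) * Ψ ω ^ 2) := by
    intro ω hω
    set D : ℝ := ∑ i : Fin n, ∑ j : Fin n, ∑ k : Fin m, |T i ω k - T j ω k| with hDdef
    have hDi_nonneg : ∀ i : Fin n,
        (0 : ℝ) ≤ ∑ j : Fin n, ∑ k : Fin m, |T i ω k - T j ω k| := fun i =>
      Finset.sum_nonneg fun j _ => Finset.sum_nonneg fun k _ => abs_nonneg _
    have hdle : ∀ i : Fin n, (∑ k : Fin m, |θstar k - T i ω k|) ≤
        ∑ j : Fin n, ∑ k : Fin m, |T i ω k - T j ω k| := by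
      intro i
      have hconv := l1dist_convexOn m (fun k => T i ω k)
      obtain ⟨y, hy, hle⟩ := hconv.exists_ge_of_mem_convexHull (Set.subset_univ _) hω
      obtain ⟨j, rfl⟩ := hy
      simp only at hle
      refine hle.trans ?_
      have heq : (∑ k : Fin m, |T j ω k - T i ω k|)
          = ∑ k : Fin m, |T i ω k - T j ω k| :=
        Finset.sum_congr rfl fun k _ => abs_sub_comm _ _
      rw [heq]
      exact Finset.single_le_sum
        (f := fun j => ∑ k : Fin m, |T i ω k - T j ω k|)
        (fun j _ => Finset.sum_nonneg fun k _ => abs_nonneg _) (Finset.mem_univ j)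
    have hSle : S ω ≤ (H / 2) * D ^ 2 := by
      have h1 : S ω = ∑ i : Fin n, (H / 2) * (∑ k : Fin m, |θstar k - T i ω k|) ^ 2 := by
        simp [hSdef, hX]
      rw [h1]
      calc ∑ i : Fin n, (H / 2) * (∑ k : Fin m, |θstar k - T i ω k|) ^ 2
          ≤ ∑ i : Fin n, (H / 2) * (∑ j : Fin n, ∑ k : Fin m, |T i ω k - T j ω k|) ^ 2 := by
            refine Finset.sum_le_sum fun i _ => ?_
            have hdn : (0 : ℝ) ≤ ∑ k : Fin m, |θstar k - T i ω k| :=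
              Finset.sum_nonneg fun k _ => abs_nonneg _
            have := pow_le_pow_left₀ hdn (hdle i) 2
            nlinarith [this, hH]
        _ = (H / 2) * ∑ i : Fin n, (∑ j : Fin n, ∑ k : Fin m, |T i ω k - T j ω k|) ^ 2 := by
            rw [Finset.mul_sum]
        _ ≤ (H / 2) * D ^ 2 := by
            have := Finset.sum_sq_le_sq_sum_of_nonneg
              (s := Finset.univ) (f := fun i : Fin n =>
                ∑ j : Fin n, ∑ k : Fin m, |T i ω k - T j ω k|)
              (fun i _ => hDi_nonneg i)
            nlinarith [this, hH]
    have hΨD : Ψ ω = Real.sqrt H / (n : ℝ) ^ 2 * D := hΨ ω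
    have hhh : (n : ℝ) * (((n : ℝ) ^ 3 / 2) * Ψ ω ^ 2) = (H / 2) * D ^ 2 := by
      rw [hΨD, mul_pow, div_pow, Real.sq_sqrt hH]
      field_simp
    linarith [hSle]
  set c : ℝ := σ / Real.sqrt (n * δ) with hcdef
  have hkey : ∀ ω, θstar ∈ convexHull ℝ (Set.range (fun i : Fin n => T i ω)) →
      (n : ℝ) * E ≤ S ω + (n : ℝ) * c →
      ω ∈ {ω | Lbar ≤ ((n : ℝ) ^ 3 / 2) * Ψ ω ^ 2 + σ / Real.sqrt (n * δ)} := by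
    intro ω hω hb
    have h1 := hptwise ω hω
    have h2 : (n : ℝ) * E ≤ (n : ℝ) * (((n : ℝ) ^ 3 / 2) * Ψ ω ^ 2 + c) := by
      rw [mul_add]; linarith
    have h3 : E ≤ ((n : ℝ) ^ 3 / 2) * Ψ ω ^ 2 + c :=
      le_of_mul_le_mul_left h2 hnpos
    exact le_trans hLbar h3
  -- reduce to bounding the complement
  suffices hcomp : μ {ω | Lbar ≤ ((n : ℝ) ^ 3 / 2) * Ψ ω ^ 2 + σ / Real.sqrt (n * δ)}ᶜ
      ≤ ENNReal.ofReal δ by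
    set A := {ω | Lbar ≤ ((n : ℝ) ^ 3 / 2) * Ψ ω ^ 2 + σ / Real.sqrt (n * δ)}
    have h1 : (1 : ENNReal) ≤ μ A + μ Aᶜ := by
      rw [← measure_univ (μ := μ), ← Set.union_compl_self A]
      exact measure_union_le _ _
    have h2 : (1 : ENNReal) ≤ μ A + ENNReal.ofReal δ :=
      h1.trans (add_le_add_right hcomp _)
    rw [ENNReal.ofReal_sub _ hδ0.le, ENNReal.ofReal_one]
    exact tsub_le_iff_right.mpr h2
  rcases hσ.lt_or_eq with hσpos | hσ0
  · -- σ > 0 : Chebyshev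
    have hnδ : (0 : ℝ) < (n : ℝ) * δ := mul_pos hnpos hδ0
    have hcpos : 0 < c := div_pos hσpos (Real.sqrt_pos.mpr hnδ)
    have hncpos : 0 < (n : ℝ) * c := mul_pos hnpos hcpos
    have hcheb := meas_ge_le_variance_div_sq (μ := μ) hSL2 hncpos
    have hval : variance S μ / ((n : ℝ) * c) ^ 2 ≤ δ := by
      have h4 : ((n : ℝ) * c) ^ 2 = (n : ℝ) * σ ^ 2 / δ := by
        rw [hcdef, mul_pow, div_pow, Real.sq_sqrt hnδ.le]
        field_simp
      rw [h4, div_le_iff₀ (by positivity)]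
      calc variance S μ ≤ (n : ℝ) * σ ^ 2 := hVarS
        _ = δ * ((n : ℝ) * σ ^ 2 / δ) := by field_simp
    refine le_trans (measure_mono_ae ?_) (hcheb.trans (ENNReal.ofReal_le_ofReal hval))
    filter_upwards [hhull] with ω hω
    intro hmem
    by_contra hlt
    apply hmem
    apply hkey ω hω
    have habs : |S ω - ∫ x, S x ∂μ| < (n : ℝ) * c := not_le.mp hlt
    have h5 : ∫ x, S x ∂μ - S ω ≤ |S ω - ∫ x, S x ∂μ| := by
      rw [abs_sub_comm]; exact le_abs_self _
    rw [hES] at habs h5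
    linarith
  · -- σ = 0 : the sample mean is a.s. constant
    have hVS : variance S μ = 0 := by
      have h1 := hVarS
      rw [← hσ0] at h1
      simp only [ne_eq, OfNat.ofNat_ne_zero, not_false_eq_true, zero_pow, mul_zero] at h1
      exact le_antisymm h1 (variance_nonneg _ _)
    have heV : evariance S μ = 0 := by
      rw [← hSL2.ofReal_variance_eq, hVS, ENNReal.ofReal_zero]
    have hae := (evariance_eq_zero_iff hSL2.aestronglyMeasurable.aemeasurable).mp heV
    have hfull : ∀ᵐ ω ∂μ,
        ω ∈ {ω | Lbar ≤ ((n : ℝ) ^ 3 / 2) * Ψ ω ^ 2 + σ / Real.sqrt (n * δ)} := by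
      filter_upwards [hhull, hae] with ω hω hSω
      apply hkey ω hω
      have hc0 : c = 0 := by rw [hcdef, ← hσ0, zero_div]
      rw [hc0, mul_zero, add_zero, hSω, hES]
    have h0 : μ {ω | Lbar ≤ ((n : ℝ) ^ 3 / 2) * Ψ ω ^ 2 + σ / Real.sqrt (n * δ)}ᶜ = 0 := by
      rw [ae_iff] at hfull
      simpa [Set.compl_setOf] using hfull
    rw [h0]
    exact zero_le
end
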